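/- arXiv:2001.10133 — 2 statements merged into one kernel-verified Lean document; each statement's English description precedes it below -/
import Mathlib

section
/- Let Q be a positive integer, let T ⊆ ℝ^Q be a nonempty bounded set, and let φ : ℝ → ℝ be M-Lipschitz with φ(0) = 0. Let ε = (ε_1, …, ε_Q) be uniformly distributed on {−1, +1}^Q (i.e., ε_1, …, ε_Q are i.i.d. with P(ε_q = 1) = P(ε_q = −1) = 1/2). Then E_ε[ sup_{t ∈ T} | Σ_{q=1}^Q ε_q φ(t_q) | ] ≤ 2M · E_ε[ sup_{t ∈ T} | Σ_{q=1}^Q ε_q t_q | ]. -/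
/-- The Rademacher sign associated with a Boolean coin flip. -/
def radSign (b : Bool) : ℝ := if b then 1 else -1

lemma radSign_not (b : Bool) : radSign (!b) = -radSign b := by cases b <;> simp [radSign]

lemma abs_radSign (b : Bool) : |radSign b| = 1 := by cases b <;> simp [radSign]

lemma bddAbove_helper {ι : Sort*} (F : ι → ℝ) {B : ℝ}
    (h : ∀ t, F t ≤ B) : BddAbove (Set.range F) :=
  ⟨B, by rintro x ⟨t, rfl⟩; exact h t⟩

lemma myCiSupAddLe {ι : Type*} [Nonempty ι] (f g a b : ι → ℝ)
    (ha : BddAbove (Set.range a)) (hb : BddAbove (Set.range b))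
    (h : ∀ i j, f i + g j ≤ max (a i + b j) (a j + b i)) :
    (⨆ i, f i) + ⨆ j, g j ≤ (⨆ i, a i) + ⨆ j, b j := by
  have key : ∀ i j, f i + g j ≤ (⨆ i, a i) + ⨆ j, b j := by
    intro i j
    refine (h i j).trans (max_le ?_ ?_)
    · exact add_le_add (le_ciSup ha i) (le_ciSup hb j)
    · exact add_le_add (le_ciSup ha j) (le_ciSup hb i)
  have h1 : ∀ i, f i ≤ ((⨆ i, a i) + ⨆ j, b j) - ⨆ j, g j := by
    intro i
    have : (⨆ j, g j) ≤ ((⨆ i, a i) + ⨆ j, b j) - f i :=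
      ciSup_le fun j => by linarith [key i j]
    linarith
  have := ciSup_le h1
  linarith

lemma abs_sum_radSign_le {Q : ℕ} (s : Finset (Fin Q)) (ε : Fin Q → Bool) (v : Fin Q → ℝ)
    {C : ℝ} (hC : 0 ≤ C) (h : ∀ q, |v q| ≤ C) :
    |∑ q ∈ s, radSign (ε q) * v q| ≤ Q * C := by
  calc |∑ q ∈ s, radSign (ε q) * v q| ≤ ∑ q ∈ s, |radSign (ε q) * v q| :=
        Finset.abs_sum_le_sum_abs _ _
    _ ≤ ∑ _q ∈ s, C := Finset.sum_le_sum fun q _ => by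
        rw [abs_mul, abs_radSign, one_mul]; exact h q
    _ = (s.card : ℝ) * C := by rw [Finset.sum_const, nsmul_eq_mul]
    _ ≤ Q * C := by
        have : (s.card : ℝ) ≤ Q := by
          have := Finset.card_le_univ s
          simpa using (Nat.cast_le.mpr this : (s.card : ℝ) ≤ (Fintype.card (Fin Q) : ℝ))
        exact mul_le_mul_of_nonneg_right this hC

lemma pair_sum {Q : ℕ} (q0 : Fin Q) (F : (Fin Q → Bool) → ℝ) :
    ∑ ε : Fin Q → Bool, F ε
      = ∑ ε ∈ Finset.univ.filter (fun ε => ε q0 = true),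
          (F ε + F (Function.update ε q0 false)) := by
  rw [Finset.sum_add_distrib]
  rw [← Finset.sum_filter_add_sum_filter_not Finset.univ (fun ε => ε q0 = true) F]
  congr 1
  refine Finset.sum_nbij' (i := fun ε => Function.update ε q0 true)
    (j := fun ε => Function.update ε q0 false) ?_ ?_ ?_ ?_ ?_
  · intro ε hε
    simp [Finset.mem_filter]
  · intro ε hε
    simp [Finset.mem_filter]
  · intro ε hε
    simp only [Finset.mem_filter, Finset.mem_univ, true_and, Bool.not_eq_true] at hε
    funext q
    by_cases hq : q = q0
    · subst hq; simp [hε]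
    · simp [Function.update_of_ne hq]
  · intro ε hε
    simp only [Finset.mem_filter, Finset.mem_univ, true_and] at hε
    funext q
    by_cases hq : q = q0
    · subst hq; simp [hε]
    · simp [Function.update_of_ne hq]
  · intro ε hε
    simp only [Finset.mem_filter, Finset.mem_univ, true_and, Bool.not_eq_true] at hε
    congr 1
    funext q
    by_cases hq : q = q0
    · subst hq; simp [hε]
    · simp [Function.update_of_ne hq]

lemma contraction_step {Q : ℕ} (q0 : Fin Q) (T : Set (Fin Q → ℝ)) (hT : T.Nonempty)
    (M C : ℝ) (hM : 0 ≤ M) (hC0 : 0 ≤ C) (ψ : Fin Q → ℝ → ℝ)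
    (hLip : ∀ a b : ℝ, |ψ q0 a - ψ q0 b| ≤ M * |a - b|)
    (hC : ∀ t ∈ T, ∀ q, |ψ q (t q)| ≤ C)
    (hC' : ∀ t ∈ T, ∀ q, |M * t q| ≤ C) :
    (∑ ε : Fin Q → Bool, ⨆ t : T, ∑ q, radSign (ε q) * ψ q (t.1 q))
      ≤ ∑ ε : Fin Q → Bool, ⨆ t : T,
          ∑ q, radSign (ε q) * Function.update ψ q0 (fun x => M * x) q (t.1 q) := by
  haveI : Nonempty T := hT.to_subtype
  set R : (Fin Q → Bool) → T → ℝ :=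
    fun ε t => ∑ q ∈ ({q0}ᶜ : Finset (Fin Q)), radSign (ε q) * ψ q (t.1 q) with hRdef
  have hdec : ∀ (ε : Fin Q → Bool) (t : T),
      ∑ q, radSign (ε q) * ψ q (t.1 q)
        = radSign (ε q0) * ψ q0 (t.1 q0) + R ε t :=
    fun ε t => Fintype.sum_eq_add_sum_compl q0 _
  have hdec' : ∀ (ε : Fin Q → Bool) (t : T),
      ∑ q, radSign (ε q) * Function.update ψ q0 (fun x => M * x) q (t.1 q)
        = radSign (ε q0) * (M * t.1 q0) + R ε t := by
    intro ε t
    rw [Fintype.sum_eq_add_sum_compl q0]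
    simp only [Function.update_self]
    congr 1
    refine Finset.sum_congr rfl fun q hq => ?_
    rw [Function.update_of_ne (by simpa using hq)]
  have hRup : ∀ (ε : Fin Q → Bool) (t : T), R (Function.update ε q0 false) t = R ε t := by
    intro ε t
    refine Finset.sum_congr rfl fun q hq => ?_
    rw [Function.update_of_ne (by simpa using hq)]
  have hRbound : ∀ (ε : Fin Q → Bool) (t : T), |R ε t| ≤ Q * C := by
    intro ε t
    exact abs_sum_radSign_le _ ε _ hC0 (fun q => hC t.1 t.2 q)
  rw [pair_sum q0, pair_sum q0]
  apply Finset.sum_le_sum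
  intro ε hε
  have hε0 : ε q0 = true := by simpa using (Finset.mem_filter.mp hε).2
  have hε0' : Function.update ε q0 false q0 = false := Function.update_self _ _ _
  have e1 : (⨆ t : T, ∑ q, radSign (ε q) * ψ q (t.1 q))
      = ⨆ t : T, (ψ q0 (t.1 q0) + R ε t) :=
    iSup_congr fun t => by rw [hdec, hε0]; simp [radSign]
  have e2 : (⨆ t : T, ∑ q, radSign (Function.update ε q0 false q) * ψ q (t.1 q))
      = ⨆ t : T, (-ψ q0 (t.1 q0) + R ε t) :=
    iSup_congr fun t => by rw [hdec, hε0', hRup]; simp [radSign]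
  have e3 : (⨆ t : T, ∑ q, radSign (ε q) * Function.update ψ q0 (fun x => M * x) q (t.1 q))
      = ⨆ t : T, (M * t.1 q0 + R ε t) :=
    iSup_congr fun t => by rw [hdec', hε0]; simp [radSign]
  have e4 : (⨆ t : T, ∑ q, radSign (Function.update ε q0 false q) *
        Function.update ψ q0 (fun x => M * x) q (t.1 q))
      = ⨆ t : T, (-(M * t.1 q0) + R ε t) :=
    iSup_congr fun t => by rw [hdec', hε0', hRup]; simp [radSign]
  rw [e1, e2, e3, e4]
  refine myCiSupAddLe _ _ _ _ ?_ ?_ ?_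
  · exact bddAbove_helper _ (B := C + Q * C) fun t => by
      have h0 := hC' t.1 t.2 q0
      have h1 : M * t.1 q0 ≤ C := (le_abs_self _).trans h0
      have h2 : R ε t ≤ Q * C := (le_abs_self _).trans (hRbound ε t)
      linarith
  · exact bddAbove_helper _ (B := C + Q * C) fun t => by
      have h0 := hC' t.1 t.2 q0
      have h1 : -(M * t.1 q0) ≤ C := by
        have := neg_abs_le (M * t.1 q0); linarith
      have h2 : R ε t ≤ Q * C := (le_abs_self _).trans (hRbound ε t)
      linarith
  · intro i j
    have h1 := hLip (i.1 q0) (j.1 q0)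
    have h2 : ψ q0 (i.1 q0) - ψ q0 (j.1 q0) ≤ M * |i.1 q0 - j.1 q0| :=
      (le_abs_self _).trans h1
    rcases abs_cases (i.1 q0 - j.1 q0) with ⟨he, _⟩ | ⟨he, _⟩
    · refine le_max_of_le_left ?_
      rw [he, mul_sub] at h2
      linarith
    · refine le_max_of_le_right ?_
      rw [he, neg_sub, mul_sub] at h2
      linarith

/-- (Rademacher contraction principle.) For a nonempty bounded set
`S ⊆ ℝ^Q`, an `M`-Lipschitz function `φ : ℝ → ℝ` with `φ(0) = 0`, and uniform i.i.d. signs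
`ε`, `E_ε[sup_{t∈S} |Σ_q ε_q φ(t_q)|] ≤ 2M · E_ε[sup_{t∈S} |Σ_q ε_q t_q|]`. -/
theorem rademacher_contraction
    {Q : ℕ} (hQ : 0 < Q) (S : Set (Fin Q → ℝ)) (hSne : S.Nonempty)
    (hSb : Bornology.IsBounded S)
    (φ : ℝ → ℝ) (M : ℝ) (hM : 0 ≤ M)
    (hLip : ∀ a b : ℝ, |φ a - φ b| ≤ M * |a - b|) (hφ0 : φ 0 = 0) :
    (∑ ε : Fin Q → Bool, ⨆ t : S, |∑ q, radSign (ε q) * φ (t.1 q)|) / 2 ^ Q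
      ≤ 2 * M *
        ((∑ ε : Fin Q → Bool, ⨆ t : S, |∑ q, radSign (ε q) * t.1 q|) / 2 ^ Q) := by
  haveI : Nonempty S := hSne.to_subtype
  set T : Set (Fin Q → ℝ) := insert 0 S with hTdef
  haveI : Nonempty T := (Set.insert_nonempty _ _).to_subtype
  -- coordinate bound
  obtain ⟨C0, hC0⟩ := hSb.exists_norm_le
  set Cm : ℝ := max C0 0 with hCm
  have hCm0 : 0 ≤ Cm := le_max_right _ _
  have hcoord : ∀ t ∈ T, ∀ q, |t q| ≤ Cm := by
    rintro t (rfl | ht) q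
    · simpa using hCm0
    · calc |t q| = ‖t q‖ := (Real.norm_eq_abs _).symm
        _ ≤ ‖t‖ := norm_le_pi_norm t q
        _ ≤ C0 := hC0 t ht
        _ ≤ Cm := le_max_left _ _
  have hφabs : ∀ x : ℝ, |φ x| ≤ M * |x| := fun x => by
    simpa [hφ0] using hLip x 0
  set C : ℝ := M * Cm with hCdef
  have hCnn : 0 ≤ C := mul_nonneg hM hCm0
  -- the interpolating families
  set ψA : Finset (Fin Q) → Fin Q → ℝ → ℝ :=
    fun A q x => if q ∈ A then M * x else φ x with hψA
  have hψLip : ∀ A q, ∀ a b : ℝ, |ψA A q a - ψA A q b| ≤ M * |a - b| := by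
    intro A q a b
    by_cases h : q ∈ A <;> simp only [hψA, h, if_true, if_false]
    · rw [← mul_sub, abs_mul, abs_of_nonneg hM]
    · exact hLip a b
  have hψC : ∀ A, ∀ t ∈ T, ∀ q, |ψA A q (t q)| ≤ C := by
    intro A t ht q
    by_cases h : q ∈ A <;> simp only [hψA, h, if_true, if_false]
    · rw [abs_mul, abs_of_nonneg hM]
      exact mul_le_mul_of_nonneg_left (hcoord t ht q) hM
    · exact (hφabs _).trans (mul_le_mul_of_nonneg_left (hcoord t ht q) hM)
  have hψC' : ∀ t ∈ T, ∀ q, |M * t q| ≤ C := by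
    intro t ht q
    rw [abs_mul, abs_of_nonneg hM]
    exact mul_le_mul_of_nonneg_left (hcoord t ht q) hM
  -- Step 2 : contraction by induction
  have hstep : ∀ A : Finset (Fin Q),
      (∑ ε : Fin Q → Bool, ⨆ t : T, ∑ q, radSign (ε q) * ψA ∅ q (t.1 q))
        ≤ ∑ ε : Fin Q → Bool, ⨆ t : T, ∑ q, radSign (ε q) * ψA A q (t.1 q) := by
    intro A
    induction A using Finset.induction_on with
    | empty => exact le_refl _
    | insert a =>
      rename_i A ha ih
      refine ih.trans ?_
      have hupd : Function.update (ψA A) a (fun x => M * x) = ψA (insert a A) := by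
        funext q x
        by_cases hq : q = a
        · subst hq; simp [hψA, Function.update_self]
        · rw [Function.update_of_ne hq]
          simp [hψA, Finset.mem_insert, hq]
      have := contraction_step a T (Set.insert_nonempty _ _) M C hM hCnn (ψA A)
        (hψLip A a) (hψC A) hψC'
      rwa [hupd] at this
  -- bounds for sups
  have hbdT : ∀ (ρ : Fin Q → ℝ → ℝ), (∀ t ∈ T, ∀ q, |ρ q (t q)| ≤ C) →
      ∀ ε : Fin Q → Bool, BddAbove (Set.range fun t : T => ∑ q, radSign (ε q) * ρ q (t.1 q)) := by
    intro ρ hρ ε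
    exact bddAbove_helper _ (B := Q * C) fun t =>
      (le_abs_self _).trans (abs_sum_radSign_le Finset.univ ε _ hCnn fun q => hρ t.1 t.2 q)
  have hbdS : ∀ ε : Fin Q → Bool,
      BddAbove (Set.range fun t : S => |∑ q, radSign (ε q) * t.1 q|) := by
    intro ε
    exact bddAbove_helper _ (B := Q * Cm) fun t =>
      abs_sum_radSign_le Finset.univ ε _ hCm0 fun q =>
        hcoord t.1 (Set.mem_insert_of_mem _ t.2) q
  have hbdφT : ∀ ε : Fin Q → Bool,
      BddAbove (Set.range fun t : T => ∑ q, radSign (ε q) * φ (t.1 q)) := by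
    intro ε
    have := hbdT (ψA ∅) (hψC ∅) ε
    simpa [hψA] using this
  -- Step 1
  have hAzero : ∀ ε : Fin Q → Bool,
      (0:ℝ) ≤ ⨆ t : T, ∑ q, radSign (ε q) * φ (t.1 q) := by
    intro ε
    have h0 : (∑ q, radSign (ε q) * φ ((0 : Fin Q → ℝ) q)) = 0 := by simp [hφ0]
    calc (0:ℝ) = ∑ q, radSign (ε q) * φ ((0 : Fin Q → ℝ) q) := h0.symm
      _ ≤ _ := le_ciSup (hbdφT ε) ⟨0, Set.mem_insert _ _⟩
  have step1 : (∑ ε : Fin Q → Bool, ⨆ t : S, |∑ q, radSign (ε q) * φ (t.1 q)|)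
      ≤ 2 * ∑ ε : Fin Q → Bool, ⨆ t : T, ∑ q, radSign (ε q) * φ (t.1 q) := by
    have key : ∀ ε : Fin Q → Bool,
        (⨆ t : S, |∑ q, radSign (ε q) * φ (t.1 q)|)
          ≤ (⨆ t : T, ∑ q, radSign (ε q) * φ (t.1 q))
            + ⨆ t : T, ∑ q, radSign ((fun q => !ε q) q) * φ (t.1 q) := by
      intro ε
      refine ciSup_le fun t => ?_
      have hmem : t.1 ∈ T := Set.mem_insert_of_mem _ t.2
      rcases abs_cases (∑ q, radSign (ε q) * φ (t.1 q)) with ⟨he, _⟩ | ⟨he, _⟩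
      · rw [he]
        have h1 : (∑ q, radSign (ε q) * φ (t.1 q))
            ≤ ⨆ t : T, ∑ q, radSign (ε q) * φ (t.1 q) :=
          le_ciSup (hbdφT ε) ⟨t.1, hmem⟩
        have h2 := hAzero (fun q => !ε q)
        linarith
      · rw [he]
        have hneg : -(∑ q, radSign (ε q) * φ (t.1 q))
            = ∑ q, radSign ((fun q => !ε q) q) * φ (t.1 q) := by
          rw [← Finset.sum_neg_distrib]
          exact Finset.sum_congr rfl fun q _ => by rw [radSign_not]; ring
        rw [hneg]
        have h1 : (∑ q, radSign ((fun q => !ε q) q) * φ (t.1 q))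
            ≤ ⨆ t : T, ∑ q, radSign ((fun q => !ε q) q) * φ (t.1 q) :=
          le_ciSup (hbdφT _) ⟨t.1, hmem⟩
        have h2 := hAzero ε
        linarith
    calc (∑ ε : Fin Q → Bool, ⨆ t : S, |∑ q, radSign (ε q) * φ (t.1 q)|)
        ≤ ∑ ε : Fin Q → Bool, ((⨆ t : T, ∑ q, radSign (ε q) * φ (t.1 q))
            + ⨆ t : T, ∑ q, radSign ((fun q => !ε q) q) * φ (t.1 q)) :=
          Finset.sum_le_sum fun ε _ => key ε
      _ = (∑ ε : Fin Q → Bool, ⨆ t : T, ∑ q, radSign (ε q) * φ (t.1 q))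
            + ∑ ε : Fin Q → Bool, ⨆ t : T, ∑ q, radSign (!ε q) * φ (t.1 q) := by
          rw [Finset.sum_add_distrib]
      _ = 2 * ∑ ε : Fin Q → Bool, ⨆ t : T, ∑ q, radSign (ε q) * φ (t.1 q) := by
          have hbij : Function.Bijective (fun ε : Fin Q → Bool => fun q => !ε q) := by
            apply Function.Involutive.bijective
            intro ε; funext q; simp
          have := Fintype.sum_bijective _ hbij
            (fun ε : Fin Q → Bool => ⨆ t : T, ∑ q, radSign (!ε q) * φ (t.1 q))
            (fun ε : Fin Q → Bool => ⨆ t : T, ∑ q, radSign (ε q) * φ (t.1 q))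
            (fun ε => rfl)
          rw [this]; ring
  -- Step 3
  have step3 : (∑ ε : Fin Q → Bool, ⨆ t : T, ∑ q, radSign (ε q) * (M * t.1 q))
      ≤ M * ∑ ε : Fin Q → Bool, ⨆ t : S, |∑ q, radSign (ε q) * t.1 q| := by
    rw [Finset.mul_sum]
    refine Finset.sum_le_sum fun ε _ => ?_
    have hSnn : (0:ℝ) ≤ ⨆ t : S, |∑ q, radSign (ε q) * t.1 q| := by
      obtain ⟨s, hs⟩ := hSne
      exact (abs_nonneg _).trans (le_ciSup (hbdS ε) ⟨s, hs⟩)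
    refine ciSup_le fun t => ?_
    rcases Set.mem_insert_iff.mp t.2 with h0 | hS
    · have : (∑ q, radSign (ε q) * (M * t.1 q)) = 0 := by
        have : ∀ q, t.1 q = 0 := fun q => by rw [h0]; rfl
        simp [this]
      rw [this]
      exact mul_nonneg hM hSnn
    · have heq : (∑ q, radSign (ε q) * (M * t.1 q)) = M * ∑ q, radSign (ε q) * t.1 q := by
        rw [Finset.mul_sum]
        exact Finset.sum_congr rfl fun q _ => by ring
      rw [heq]
      refine mul_le_mul_of_nonneg_left ?_ hM
      exact (le_abs_self _).trans (le_ciSup (hbdS ε) ⟨t.1, hS⟩)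
  -- assemble
  have step2 : (∑ ε : Fin Q → Bool, ⨆ t : T, ∑ q, radSign (ε q) * φ (t.1 q))
      ≤ ∑ ε : Fin Q → Bool, ⨆ t : T, ∑ q, radSign (ε q) * (M * t.1 q) := by
    have := hstep Finset.univ
    simpa [hψA] using this
  have main : (∑ ε : Fin Q → Bool, ⨆ t : S, |∑ q, radSign (ε q) * φ (t.1 q)|)
      ≤ 2 * M * ∑ ε : Fin Q → Bool, ⨆ t : S, |∑ q, radSign (ε q) * t.1 q| := by
    calc (∑ ε : Fin Q → Bool, ⨆ t : S, |∑ q, radSign (ε q) * φ (t.1 q)|)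
        ≤ 2 * ∑ ε : Fin Q → Bool, ⨆ t : T, ∑ q, radSign (ε q) * φ (t.1 q) := step1
      _ ≤ 2 * ∑ ε : Fin Q → Bool, ⨆ t : T, ∑ q, radSign (ε q) * (M * t.1 q) := by
          linarith [step2]
      _ ≤ 2 * (M * ∑ ε : Fin Q → Bool, ⨆ t : S, |∑ q, radSign (ε q) * t.1 q|) := by
          linarith [step3]
      _ = 2 * M * ∑ ε : Fin Q → Bool, ⨆ t : S, |∑ q, radSign (ε q) * t.1 q| := by ring
  have h2Q : (0:ℝ) < 2 ^ Q := by positivity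
  rw [div_le_iff₀ h2Q]
  calc (∑ ε : Fin Q → Bool, ⨆ t : S, |∑ q, radSign (ε q) * φ (t.1 q)|)
      ≤ 2 * M * ∑ ε : Fin Q → Bool, ⨆ t : S, |∑ q, radSign (ε q) * t.1 q| := main
    _ = 2 * M * ((∑ ε : Fin Q → Bool, ⨆ t : S, |∑ q, radSign (ε q) * t.1 q|) / 2 ^ Q) * 2 ^ Q := by
        field_simp
end

section
/- Let (Z, 𝒜, μ) be a probability space, Q a positive integer, and G a nonempty countable family of measurable functions g : Z → [0, 1]. Define the Rademacher complexity ℜ_Q(G) = E_{z∼μ^{⊗Q}} E_ε [ sup_{g∈G} | (2/Q) Σ_{q=1}^Q ε_q g(z_q) | ], where ε is uniform on {−1,+1}^Q and independent of z. Then for every δ ∈ (0, 1), with probability at least 1 − δ over z = (z_1, …, z_Q) drawn i.i.d. from μ, every g ∈ G satisfies E_μ[g] ≤ (1/Q) Σ_{q=1}^Q g(z_q) + ℜ_Q(G) + √( 8 ln(2/δ) / Q ). -/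
open MeasureTheory

section helpers
variable {Z : Type*} [MeasurableSpace Z] {μ : Measure Z} [IsProbabilityMeasure μ]

lemma my_integrable_of_bdd {f : Z → ℝ} (hf : Measurable f) {C : ℝ} (hb : ∀ x, |f x| ≤ C) :
    Integrable f μ :=
  ⟨hf.aestronglyMeasurable, HasFiniteIntegral.of_bounded (C := C)
    (Filter.Eventually.of_forall (by simpa [Real.norm_eq_abs] using hb))⟩

lemma my_abs_integral_le {f : Z → ℝ} {C : ℝ} (hb : ∀ x, |f x| ≤ C) :
    |∫ x, f x ∂μ| ≤ C := by
  have := norm_integral_le_of_norm_le_const (μ := μ) (f := f) (C := C)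
    (Filter.Eventually.of_forall (by simpa [Real.norm_eq_abs] using hb))
  simpa [Real.norm_eq_abs, measure_univ] using this

lemma my_exp_convex {y c : ℝ} (l : ℝ) (hc : 0 < c) (hy : |y| ≤ c) :
    Real.exp (l * y) ≤ Real.cosh (l * c) + (y / c) * Real.sinh (l * c) := by
  obtain ⟨hy1, hy2⟩ := abs_le.1 hy
  have key := convexOn_exp.2 (Set.mem_univ (-(l * c))) (Set.mem_univ (l * c))
    (show (0:ℝ) ≤ (c - y) / (2 * c) by apply div_nonneg <;> linarith)
    (show (0:ℝ) ≤ (c + y) / (2 * c) by apply div_nonneg <;> linarith)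
    (show (c - y) / (2 * c) + (c + y) / (2 * c) = 1 by
      rw [← add_div, div_eq_one_iff_eq (by positivity)]; ring)
  have hcne : c ≠ 0 := ne_of_gt hc
  have h1 : (c - y) / (2 * c) * (-(l * c)) + (c + y) / (2 * c) * (l * c) = l * y := by
    field_simp; ring
  have h2 : (c - y) / (2 * c) * Real.exp (-(l * c)) + (c + y) / (2 * c) * Real.exp (l * c)
      = Real.cosh (l * c) + (y / c) * Real.sinh (l * c) := by
    rw [Real.cosh_eq, Real.sinh_eq, Real.exp_neg]
    have := (Real.exp_pos (l * c)).ne'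
    field_simp; ring
  simp only [smul_eq_mul] at key
  rw [h1, h2] at key; exact key

lemma my_hoeffding (μ : Measure Z) [IsProbabilityMeasure μ] {c : ℝ} (l : ℝ) (hc : 0 ≤ c)
    {X : Z → ℝ} (hX : Measurable X) (hb : ∀ z, |X z| ≤ 1)
    (hd : ∀ z, |X z - ∫ x, X x ∂μ| ≤ c) :
    ∫ z, Real.exp (l * X z) ∂μ ≤ Real.exp (l * (∫ x, X x ∂μ) + l ^ 2 * c ^ 2 / 2) := by
  set m := ∫ x, X x ∂μ with hm
  have hXint : Integrable X μ := my_integrable_of_bdd hX hb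
  rcases eq_or_lt_of_le hc with hc0 | hc0
  · have hz : ∀ z, X z = m := by
      intro z
      have := hd z; rw [← hc0] at this
      have h0 := abs_nonpos_iff.1 this
      linarith [sub_eq_zero.1 h0]
    calc ∫ z, Real.exp (l * X z) ∂μ = ∫ _z, Real.exp (l * m) ∂μ := by
          apply integral_congr_ae; filter_upwards with z; rw [hz z]
      _ = Real.exp (l * m) := by simp [measure_univ]
      _ ≤ Real.exp (l * m + l ^ 2 * c ^ 2 / 2) := by
          apply Real.exp_le_exp.2; nlinarith [sq_nonneg (l * c)]
  · have key : ∀ z, Real.exp (l * X z) ≤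
        Real.exp (l * m) * (Real.cosh (l * c) + ((X z - m) / c) * Real.sinh (l * c)) := by
      intro z
      have h1 : Real.exp (l * X z) = Real.exp (l * m) * Real.exp (l * (X z - m)) := by
        rw [← Real.exp_add]; ring_nf
      rw [h1]
      exact mul_le_mul_of_nonneg_left (my_exp_convex l hc0 (hd z)) (Real.exp_pos _).le
    have hint2 : Integrable (fun z => Real.exp (l * m) *
        (Real.cosh (l * c) + ((X z - m) / c) * Real.sinh (l * c))) μ := by
      apply Integrable.const_mul
      exact (integrable_const _).add (((hXint.sub (integrable_const m)).div_const c).mul_const _)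
    have hint1 : Integrable (fun z => Real.exp (l * X z)) μ := by
      apply my_integrable_of_bdd (by fun_prop) (C := Real.exp |l|)
      intro x
      rw [abs_of_pos (Real.exp_pos _)]
      apply Real.exp_le_exp.2
      calc l * X x ≤ |l * X x| := le_abs_self _
        _ = |l| * |X x| := abs_mul _ _
        _ ≤ |l| * 1 := by nlinarith [abs_nonneg l, hb x]
        _ = |l| := mul_one _
    calc ∫ z, Real.exp (l * X z) ∂μ
        ≤ ∫ z, Real.exp (l * m) *
            (Real.cosh (l * c) + ((X z - m) / c) * Real.sinh (l * c)) ∂μ :=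
          integral_mono hint1 hint2 key
      _ = Real.exp (l * m) * (Real.cosh (l * c) + ((m - m) / c) * Real.sinh (l * c)) := by
          rw [integral_const_mul]
          congr 1
          have i2 : Integrable (fun z => (X z - m) / c * Real.sinh (l * c)) μ :=
            ((hXint.sub (integrable_const m)).div_const c).mul_const _
          have i3 : Integrable (fun z => X z - m) μ := hXint.sub (integrable_const m)
          rw [integral_add (integrable_const _) i2, integral_mul_const, integral_div,
            integral_sub hXint (integrable_const m)]
          simp [measure_univ, hm]
      _ = Real.exp (l * m) * Real.cosh (l * c) := by simp
      _ ≤ Real.exp (l * m) * Real.exp ((l * c) ^ 2 / 2) :=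
          mul_le_mul_of_nonneg_left (Real.cosh_le_exp_half_sq _) (Real.exp_pos _).le
      _ = Real.exp (l * m + l ^ 2 * c ^ 2 / 2) := by rw [← Real.exp_add]; ring_nf


lemma my_exp_bound {l x : ℝ} (hx : |x| ≤ 1) : |Real.exp (l * x)| ≤ Real.exp |l| := by
  rw [abs_of_pos (Real.exp_pos _)]
  apply Real.exp_le_exp.2
  calc l * x ≤ |l * x| := le_abs_self _
    _ = |l| * |x| := abs_mul _ _
    _ ≤ |l| * 1 := by nlinarith [abs_nonneg l]
    _ = |l| := mul_one _

lemma my_mp_fst {W : Type*} [MeasurableSpace W] (μ : Measure Z) [IsProbabilityMeasure μ]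
    (ν : Measure W) [IsProbabilityMeasure ν] :
    MeasurePreserving (Prod.fst : Z × W → Z) (μ.prod ν) μ :=
  ⟨measurable_fst, by simp [Measure.map_fst_prod, measure_univ]⟩

lemma my_mp_snd {W : Type*} [MeasurableSpace W] (μ : Measure Z) [IsProbabilityMeasure μ]
    (ν : Measure W) [IsProbabilityMeasure ν] :
    MeasurePreserving (Prod.snd : Z × W → W) (μ.prod ν) ν :=
  ⟨measurable_snd, by simp [Measure.map_snd_prod, measure_univ]⟩

lemma my_mcdiarmid_mgf (μ : Measure Z) [IsProbabilityMeasure μ] :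
    ∀ (n : ℕ) (c l : ℝ), 0 ≤ c → ∀ f : (Fin n → Z) → ℝ, Measurable f →
      (∀ z, |f z| ≤ 1) →
      (∀ (z z' : Fin n → Z) (q : Fin n), (∀ j, j ≠ q → z j = z' j) → |f z - f z'| ≤ c) →
      ∫ z, Real.exp (l * f z) ∂(Measure.pi fun _ : Fin n => μ)
        ≤ Real.exp (l * (∫ z, f z ∂(Measure.pi fun _ : Fin n => μ)) + n * l ^ 2 * c ^ 2 / 2) := by
  intro n
  induction n with
  | zero =>
    intro c l hc f hf hb hd
    rw [integral_unique, integral_unique]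
    simp [measure_univ]
  | succ n ih =>
    intro c l hc f hf hb hd
    set π : Measure (Fin n → Z) := Measure.pi fun _ => μ with hπ
    set e := MeasurableEquiv.piFinSuccAbove (fun _ : Fin (n + 1) => Z) 0 with he
    have mp : MeasurePreserving e (Measure.pi fun _ : Fin (n+1) => μ) (μ.prod π) :=
      measurePreserving_piFinSuccAbove (fun _ : Fin (n+1) => μ) 0
    set F : Z × (Fin n → Z) → ℝ := fun p => f (e.symm p) with hF
    have hFmeas : Measurable F := hf.comp e.symm.measurable
    have hFb : ∀ p, |F p| ≤ 1 := fun p => hb _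
    have hsymm : ∀ (x : Z) (w : Fin n → Z), e.symm (x, w) = Fin.insertNth (α := fun _ => Z) 0 x w := by
      intro x w; rfl
    have hsucc : ∀ (x : Z) (w : Fin n → Z) (k : Fin n),
        (Fin.insertNth (α := fun _ => Z) 0 x w) k.succ = w k := by
      intro x w k
      have h0 : (0 : Fin (n+1)).succAbove k = k.succ := rfl
      rw [← h0, Fin.insertNth_apply_succAbove]
    have key1 : ∫ z, Real.exp (l * f z) ∂(Measure.pi fun _ : Fin (n+1) => μ)
        = ∫ p, Real.exp (l * F p) ∂(μ.prod π) := by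
      rw [← mp.integral_comp e.measurableEmbedding (fun p => Real.exp (l * F p))]
      congr 1; ext z; simp [hF]
    have key2 : ∫ z, f z ∂(Measure.pi fun _ : Fin (n+1) => μ) = ∫ p, F p ∂(μ.prod π) := by
      rw [← mp.integral_comp e.measurableEmbedding (fun p => F p)]
      congr 1; ext z; simp [hF]
    have Gint : Integrable (fun p => Real.exp (l * F p)) (μ.prod π) :=
      my_integrable_of_bdd (by fun_prop) (fun p => my_exp_bound (hFb p))
    set h : Z → ℝ := fun x => ∫ w, F (x, w) ∂π with hh
    have hhmeas : Measurable h := hFmeas.stronglyMeasurable.integral_prod_right'.measurable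
    have hh1 : ∀ x, |h x| ≤ 1 := fun x => my_abs_integral_le (fun w => hFb _)
    have hhint : Integrable h μ := my_integrable_of_bdd hhmeas hh1
    have hint_x : ∀ x : Z, Integrable (fun w => F (x, w)) π := fun x =>
      my_integrable_of_bdd (hFmeas.comp measurable_prodMk_left) (fun w => hFb _)
    have hdh : ∀ x x' : Z, |h x - h x'| ≤ c := by
      intro x x'
      have hsub : h x - h x' = ∫ w, (F (x, w) - F (x', w)) ∂π := by
        rw [integral_sub (hint_x x) (hint_x x')]
      rw [hsub]
      apply my_abs_integral_le
      intro w
      apply hd _ _ 0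
      intro j hj
      induction j using Fin.cases with
      | zero => exact absurd rfl hj
      | succ k => rw [hsymm, hsymm, hsucc, hsucc]
    have hdm : ∀ x, |h x - ∫ x', h x' ∂μ| ≤ c := by
      intro x
      have hsub : h x - ∫ x', h x' ∂μ = ∫ x', (h x - h x') ∂μ := by
        rw [integral_sub (integrable_const _) hhint]
        simp [measure_univ]
      rw [hsub]
      exact my_abs_integral_le (fun x' => hdh x x')
    have hinner : ∀ x, ∫ w, Real.exp (l * F (x, w)) ∂π
        ≤ Real.exp (l * h x + n * l ^ 2 * c ^ 2 / 2) := by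
      intro x
      apply ih c l hc (fun w => F (x, w)) (hFmeas.comp measurable_prodMk_left) (fun w => hFb _)
      intro w w' q hagree
      apply hd _ _ q.succ
      intro j hj
      induction j using Fin.cases with
      | zero => rw [hsymm, hsymm, Fin.insertNth_apply_same, Fin.insertNth_apply_same]
      | succ k =>
        rw [hsymm, hsymm, hsucc, hsucc]
        exact hagree k (fun hk => hj (by rw [hk]))
    have hint2 : Integrable (fun x => Real.exp (l * h x + n * l ^ 2 * c ^ 2 / 2)) μ := by
      apply my_integrable_of_bdd (by fun_prop) (C := Real.exp (|l| + n * l ^ 2 * c ^ 2 / 2))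
      intro x
      rw [abs_of_pos (Real.exp_pos _)]
      apply Real.exp_le_exp.2
      have := my_exp_bound (l := l) (hh1 x)
      have h2 : l * h x ≤ |l| := by
        calc l * h x ≤ |l * h x| := le_abs_self _
          _ = |l| * |h x| := abs_mul _ _
          _ ≤ |l| * 1 := by nlinarith [abs_nonneg l, hh1 x]
          _ = |l| := mul_one _
      linarith
    have hm : ∫ x, h x ∂μ = ∫ z, f z ∂(Measure.pi fun _ : Fin (n+1) => μ) := by
      rw [key2, integral_prod _ (my_integrable_of_bdd hFmeas hFb)]
    calc ∫ z, Real.exp (l * f z) ∂(Measure.pi fun _ : Fin (n+1) => μ)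
        = ∫ x, (∫ w, Real.exp (l * F (x, w)) ∂π) ∂μ := by
          rw [key1, integral_prod _ Gint]
      _ ≤ ∫ x, Real.exp (l * h x + n * l ^ 2 * c ^ 2 / 2) ∂μ :=
          integral_mono Gint.integral_prod_left hint2 hinner
      _ = Real.exp (n * l ^ 2 * c ^ 2 / 2) * ∫ x, Real.exp (l * h x) ∂μ := by
          rw [← integral_const_mul]
          congr 1; ext x; rw [← Real.exp_add]; ring_nf
      _ ≤ Real.exp (n * l ^ 2 * c ^ 2 / 2)
            * Real.exp (l * (∫ x, h x ∂μ) + l ^ 2 * c ^ 2 / 2) :=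
          mul_le_mul_of_nonneg_left (my_hoeffding μ l hc hhmeas hh1 hdm) (Real.exp_pos _).le
      _ = Real.exp (l * (∫ z, f z ∂(Measure.pi fun _ : Fin (n+1) => μ))
            + (n + 1 : ℕ) * l ^ 2 * c ^ 2 / 2) := by
          rw [← Real.exp_add, hm]
          push_cast
          ring_nf


lemma my_mp_eval (μ : Measure Z) [IsProbabilityMeasure μ] {n : ℕ} (q : Fin (n+1)) :
    MeasurePreserving (fun z : Fin (n+1) → Z => z q) (Measure.pi fun _ => μ) μ :=
  (my_mp_fst μ (Measure.pi fun _ : Fin n => μ)).comp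
    (measurePreserving_piFinSuccAbove (fun _ : Fin (n+1) => μ) q)

lemma my_integral_eval (μ : Measure Z) [IsProbabilityMeasure μ] {n : ℕ} (q : Fin (n+1))
    {g : Z → ℝ} (hg : Measurable g) :
    ∫ z, g (z q) ∂(Measure.pi fun _ : Fin (n+1) => μ) = ∫ x, g x ∂μ := by
  have h := integral_map (μ := Measure.pi fun _ : Fin (n+1) => μ)
    (my_mp_eval μ q).measurable.aemeasurable hg.aestronglyMeasurable
  rw [(my_mp_eval μ q).map_eq] at h
  exact h.symm

lemma my_integral_marginal {W : Type*} [MeasurableSpace W] (μ : Measure Z)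
    [IsProbabilityMeasure μ] (ν : Measure W) [IsProbabilityMeasure ν]
    {φ : Z → W} (hφ : MeasurePreserving φ μ ν) {g : W → ℝ} (hg : Measurable g) :
    ∫ z, g (φ z) ∂μ = ∫ x, g x ∂ν := by
  have h := integral_map (μ := μ) hφ.measurable.aemeasurable hg.aestronglyMeasurable
  rw [hφ.map_eq] at h
  exact h.symm

end helpers


set_option maxHeartbeats 1000000 in
/-- (Uniform generalization bound via Rademacher complexity.) For a
probability measure `μ` on `Z`, a nonempty countable family `G` of measurable functions
`Z → [0,1]`, and `R` the Rademacher complexity of `G` on `Q` i.i.d. samples, for every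
`δ ∈ (0,1)`, with probability at least `1 − δ` over `z ∼ μ^{⊗Q}`, every `g ∈ G` satisfies
`E_μ[g] ≤ (1/Q) Σ_q g(z_q) + R + √(8 ln(2/δ)/Q)`. -/
theorem rademacher_generalization_bound
    {Z : Type*} [MeasurableSpace Z] (μ : Measure Z) [IsProbabilityMeasure μ]
    {Q : ℕ} (hQ : 0 < Q)
    (G : Set (Z → ℝ)) (hGc : G.Countable) (hGne : G.Nonempty)
    (hmeas : ∀ g ∈ G, Measurable g)
    (hrange : ∀ g ∈ G, ∀ z : Z, g z ∈ Set.Icc (0 : ℝ) 1)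
    (R : ℝ)
    (hR : R = ∫ z : Fin Q → Z,
        ((∑ ε : Fin Q → Bool,
            ⨆ g : G, |(2 / (Q : ℝ)) * ∑ q, radSign (ε q) * g.1 (z q)|) / 2 ^ Q)
        ∂(Measure.pi fun _ : Fin Q => μ)) :
    ∀ δ ∈ Set.Ioo (0 : ℝ) 1,
      ENNReal.ofReal (1 - δ) ≤
        (Measure.pi fun _ : Fin Q => μ)
          {z : Fin Q → Z | ∀ g ∈ G,
            ∫ ζ, g ζ ∂μ ≤ (1 / (Q : ℝ)) * ∑ q, g (z q) + R
              + Real.sqrt (8 * Real.log (2 / δ) / Q)} := by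
  intro δ hδ
  obtain ⟨hδ0, hδ1⟩ := hδ
  obtain ⟨n, rfl⟩ := Nat.exists_eq_succ_of_ne_zero hQ.ne'
  haveI : Countable ↥G := hGc.to_subtype
  haveI : Nonempty ↥G := hGne.to_subtype
  set ν : Measure (Fin (n+1) → Z) := Measure.pi fun _ => μ with hν
  set Qr : ℝ := ((n+1 : ℕ) : ℝ) with hQr
  have hQrpos : 0 < Qr := by positivity
  have hQrne : Qr ≠ 0 := hQrpos.ne'
  -- basic objects
  set S : ↥G → (Fin (n+1) → Z) → ℝ := fun g z => (1 / Qr) * ∑ q, g.1 (z q) with hSdef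
  set I : ↥G → ℝ := fun g => ∫ ζ, g.1 ζ ∂μ with hIdef
  set Φ : (Fin (n+1) → Z) → ℝ := fun z => ⨆ g : ↥G, (I g - S g z) with hΦdef
  have hgm : ∀ g : ↥G, Measurable g.1 := fun g => hmeas g.1 g.2
  have hg01 : ∀ (g : ↥G) (x : Z), g.1 x ∈ Set.Icc (0:ℝ) 1 := fun g x => hrange g.1 g.2 x
  have hgabs : ∀ (g : ↥G) (x : Z), |g.1 x| ≤ 1 := by
    intro g x; rw [abs_le]; constructor
    · linarith [(hg01 g x).1]
    · exact (hg01 g x).2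
  have hI0 : ∀ g, 0 ≤ I g := fun g => integral_nonneg fun x => (hg01 g x).1
  have hI1 : ∀ g, I g ≤ 1 := fun g =>
    le_trans (le_abs_self _) (my_abs_integral_le (hgabs g))
  have hS0 : ∀ g z, 0 ≤ S g z := by
    intro g z
    apply mul_nonneg (by positivity)
    exact Finset.sum_nonneg fun q _ => (hg01 g (z q)).1
  have hS1 : ∀ g z, S g z ≤ 1 := by
    intro g z
    rw [hSdef]
    simp only [one_div]
    rw [inv_mul_le_iff₀ hQrpos, mul_one]
    calc ∑ q, g.1 (z q) ≤ ∑ _q : Fin (n+1), (1:ℝ) :=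
          Finset.sum_le_sum fun q _ => (hg01 g (z q)).2
      _ = Qr := by simp [hQr]
  have hSmeas : ∀ g, Measurable (S g) := by
    intro g
    apply Measurable.const_mul
    exact Finset.measurable_sum _ fun q _ => (hgm g).comp (measurable_pi_apply q)
  have hbdd : ∀ z, BddAbove (Set.range fun g : ↥G => I g - S g z) := by
    intro z
    refine ⟨1, ?_⟩
    rintro _ ⟨g, rfl⟩
    have := hS0 g z; have := hI1 g; dsimp; linarith
  have hΦle : ∀ z, Φ z ≤ 1 := by
    intro z
    apply ciSup_le
    intro g
    have := hS0 g z; have := hI1 g; linarith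
  have hΦge : ∀ z, -1 ≤ Φ z := by
    intro z
    obtain ⟨g⟩ := (inferInstance : Nonempty ↥G)
    calc (-1 : ℝ) ≤ I g - S g z := by have := hI0 g; have := hS1 g z; linarith
      _ ≤ Φ z := le_ciSup (hbdd z) g
  have hΦb : ∀ z, |Φ z| ≤ 1 := fun z => abs_le.2 ⟨hΦge z, hΦle z⟩
  have hΦmeas : Measurable Φ :=
    Measurable.iSup fun g => measurable_const.sub (hSmeas g)
  have hΦint : Integrable Φ ν := my_integrable_of_bdd hΦmeas hΦb
  -- bounded differences
  have hSdiff : ∀ (g : ↥G) (z z' : Fin (n+1) → Z) (q : Fin (n+1)),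
      (∀ j, j ≠ q → z j = z' j) → |S g z - S g z'| ≤ 1 / Qr := by
    intro g z z' q hagree
    have hkey : S g z - S g z' = (1 / Qr) * (g.1 (z q) - g.1 (z' q)) := by
      rw [hSdef]
      dsimp only
      rw [← mul_sub, ← Finset.sum_sub_distrib]
      congr 1
      apply Finset.sum_eq_single_of_mem q (Finset.mem_univ q)
      intro j _ hj
      rw [hagree j hj, sub_self]
    rw [hkey, abs_mul, abs_of_pos (by positivity : (0:ℝ) < 1 / Qr)]
    have h1 : |g.1 (z q) - g.1 (z' q)| ≤ 1 := by
      have := hg01 g (z q); have := hg01 g (z' q)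
      rw [abs_le]; constructor <;> [skip; skip] <;>
        [linarith [(hg01 g (z q)).1, (hg01 g (z' q)).2];
         linarith [(hg01 g (z q)).2, (hg01 g (z' q)).1]]
    nlinarith [one_div_pos.2 hQrpos]
  have hΦdiff1 : ∀ (z z' : Fin (n+1) → Z) (q : Fin (n+1)),
      (∀ j, j ≠ q → z j = z' j) → Φ z - Φ z' ≤ 1 / Qr := by
    intro z z' q hagree
    rw [sub_le_iff_le_add]
    apply ciSup_le
    intro g
    have h1 : I g - S g z = (I g - S g z') + (S g z' - S g z) := by ring
    rw [h1]
    have h2 : I g - S g z' ≤ Φ z' := le_ciSup (hbdd z') g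
    have h3 : S g z' - S g z ≤ 1 / Qr := by
      have := hSdiff g z' z q (fun j hj => (hagree j hj).symm)
      calc S g z' - S g z ≤ |S g z' - S g z| := le_abs_self _
        _ ≤ 1 / Qr := this
    linarith
  have hΦdiff : ∀ (z z' : Fin (n+1) → Z) (q : Fin (n+1)),
      (∀ j, j ≠ q → z j = z' j) → |Φ z - Φ z'| ≤ 1 / Qr := by
    intro z z' q hagree
    rw [abs_le]
    constructor
    · have := hΦdiff1 z' z q (fun j hj => (hagree j hj).symm); linarith
    · exact hΦdiff1 z z' q hagree
  -- Rademacher complexity pieces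
  set U : (Fin (n+1) → Bool) → (Fin (n+1) → Z) → ℝ := fun ε z =>
    ⨆ g : ↥G, |(2 / Qr) * ∑ q, radSign (ε q) * g.1 (z q)| with hUdef
  have hUmeas : ∀ ε, Measurable (U ε) := by
    intro ε
    apply Measurable.iSup
    intro g
    apply Measurable.abs
    apply Measurable.const_mul
    exact Finset.measurable_sum _ fun q _ =>
      ((hgm g).comp (measurable_pi_apply q)).const_mul _
  have habs_term : ∀ (ε : Fin (n+1) → Bool) (g : ↥G) (z : Fin (n+1) → Z),
      |(2 / Qr) * ∑ q, radSign (ε q) * g.1 (z q)| ≤ 2 := by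
    intro ε g z
    rw [abs_mul]
    have h1 : |∑ q, radSign (ε q) * g.1 (z q)| ≤ Qr := by
      calc |∑ q, radSign (ε q) * g.1 (z q)| ≤ ∑ q, |radSign (ε q) * g.1 (z q)| :=
            Finset.abs_sum_le_sum_abs _ _
        _ ≤ ∑ _q : Fin (n+1), (1:ℝ) := by
            apply Finset.sum_le_sum
            intro q _
            rw [abs_mul]
            have hrs : |radSign (ε q)| = 1 := by cases hb : ε q <;> simp [radSign, hb]
            rw [hrs, one_mul]
            exact hgabs g (z q)
        _ = Qr := by simp [hQr]
    have h2 : |2 / Qr| = 2 / Qr := abs_of_pos (by positivity)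
    rw [h2]
    calc (2 / Qr) * |∑ q, radSign (ε q) * g.1 (z q)| ≤ (2 / Qr) * Qr :=
          mul_le_mul_of_nonneg_left h1 (by positivity)
      _ = 2 := by field_simp
  have hUbddr : ∀ (ε : Fin (n+1) → Bool) (z : Fin (n+1) → Z), BddAbove (Set.range fun g : ↥G =>
      |(2 / Qr) * ∑ q, radSign (ε q) * g.1 (z q)|) := by
    intro ε z
    exact ⟨2, by rintro _ ⟨g', rfl⟩; exact habs_term ε g' z⟩
  have hU2 : ∀ ε z, |U ε z| ≤ 2 := by
    intro ε z
    rw [abs_le]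
    constructor
    · obtain ⟨g⟩ := (inferInstance : Nonempty ↥G)
      calc (-2:ℝ) ≤ |(2 / Qr) * ∑ q, radSign (ε q) * g.1 (z q)| := by
            have := abs_nonneg ((2 / Qr) * ∑ q, radSign (ε q) * g.1 (z q)); linarith
        _ ≤ U ε z := le_ciSup (hUbddr ε z) g
    · exact ciSup_le fun g => habs_term ε g z
  have hRsum : R = (∑ ε : Fin (n+1) → Bool, ∫ z, U ε z ∂ν) / 2 ^ (n+1) := by
    rw [hR, integral_div, integral_finset_sum _
      (fun ε _ => my_integrable_of_bdd (hUmeas ε) (fun z => hU2 ε z))]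
  -- the symmetrized pair functional
  set π₂ : Measure (Fin (n+1) → Z × Z) := Measure.pi fun _ => μ.prod μ with hπ₂
  set Ψ : (Fin (n+1) → Z) × (Fin (n+1) → Z) → ℝ :=
    fun p => ⨆ g : ↥G, (S g p.2 - S g p.1) with hΨdef
  have hΨbddr : ∀ p : (Fin (n+1) → Z) × (Fin (n+1) → Z), BddAbove (Set.range fun g : ↥G => S g p.2 - S g p.1) := by
    intro p; refine ⟨1, ?_⟩; rintro _ ⟨g, rfl⟩
    have := hS0 g p.1; have := hS1 g p.2; dsimp; linarith
  have hΨb : ∀ p : (Fin (n+1) → Z) × (Fin (n+1) → Z), |Ψ p| ≤ 1 := by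
    intro p
    rw [abs_le]; constructor
    · obtain ⟨g⟩ := (inferInstance : Nonempty ↥G)
      calc (-1:ℝ) ≤ S g p.2 - S g p.1 := by
            have := hS0 g p.2; have := hS1 g p.1; linarith
        _ ≤ Ψ p := le_ciSup (hΨbddr p) g
    · apply ciSup_le; intro g; have := hS1 g p.2; have := hS0 g p.1; linarith
  have hΨmeas : Measurable Ψ := Measurable.iSup fun g =>
    ((hSmeas g).comp measurable_snd).sub ((hSmeas g).comp measurable_fst)
  have hΨint : Integrable Ψ (ν.prod ν) := my_integrable_of_bdd hΨmeas hΨb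
  have hSb2 : ∀ (g : ↥G) (z : Fin (n+1) → Z), |S g z| ≤ 1 := fun g z =>
    abs_le.2 ⟨by linarith [hS0 g z], hS1 g z⟩
  -- Step A
  have hIS : ∀ g : ↥G, ∫ z', S g z' ∂ν = I g := by
    intro g
    rw [hSdef]
    dsimp only
    rw [integral_const_mul]
    have hfs := integral_finset_sum (μ := ν) Finset.univ
      (f := fun (q : Fin (n+1)) (z : Fin (n+1) → Z) => g.1 (z q))
      (fun q _ => my_integrable_of_bdd ((hgm g).comp (measurable_pi_apply q))
        (fun z => hgabs g (z q)))
    rw [hfs]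
    have heval : ∀ q : Fin (n+1), ∫ z, g.1 (z q) ∂ν = I g := fun q =>
      my_integral_eval μ q (hgm g)
    rw [Finset.sum_congr rfl (fun q _ => heval q), Finset.sum_const, Finset.card_univ,
      Fintype.card_fin, nsmul_eq_mul]
    rw [← hQr]
    field_simp
  have stepA : ∀ z, Φ z ≤ ∫ z', Ψ (z, z') ∂ν := by
    intro z
    apply ciSup_le
    intro g
    have h1 : I g - S g z = ∫ z', (S g z' - S g z) ∂ν := by
      rw [integral_sub (my_integrable_of_bdd (hSmeas g) (hSb2 g)) (integrable_const _),
        hIS g, integral_const]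
      simp [measure_univ]
    rw [h1]
    apply integral_mono
      (my_integrable_of_bdd ((hSmeas g).sub measurable_const)
        (fun z' => by
          have := hSb2 g z'; have := hSb2 g z
          calc |S g z' - S g z| ≤ |S g z'| + |S g z| := abs_sub _ _
            _ ≤ 2 := by linarith))
      (my_integrable_of_bdd (hΨmeas.comp measurable_prodMk_left) (fun z' => hΨb _))
    exact fun z' => le_ciSup (hΨbddr (z, z')) g
  -- Step B
  have stepB : ∫ z, Φ z ∂ν ≤ ∫ p, Ψ p ∂(ν.prod ν) := by
    calc ∫ z, Φ z ∂ν ≤ ∫ z, (∫ z', Ψ (z, z') ∂ν) ∂ν :=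
          integral_mono hΦint hΨint.integral_prod_left stepA
      _ = ∫ p, Ψ p ∂(ν.prod ν) := (integral_prod _ hΨint).symm
  -- Step C
  set J := MeasurableEquiv.arrowProdEquivProdArrow Z Z (Fin (n+1)) with hJdef
  have mpJ : MeasurePreserving (⇑J) π₂ (ν.prod ν) :=
    measurePreserving_arrowProdEquivProdArrow Z Z (Fin (n+1)) (fun _ => μ) (fun _ => μ)
  have stepC : ∫ p, Ψ p ∂(ν.prod ν) = ∫ w, Ψ (J w) ∂π₂ :=
    (mpJ.integral_comp J.measurableEmbedding Ψ).symm
  -- Step D/E/F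
  have stepF : ∀ ε : Fin (n+1) → Bool, ∫ w, Ψ (J w) ∂π₂ ≤ ∫ z, U ε z ∂ν := by
    intro ε
    set T : (Fin (n+1) → Z × Z) → (Fin (n+1) → Z × Z) :=
      fun w q => if ε q then w q else (w q).swap with hTdef
    have mpT : MeasurePreserving T π₂ π₂ :=
      measurePreserving_pi (fun _ => μ.prod μ) (fun _ => μ.prod μ)
        (f := fun q (p : Z × Z) => if ε q then p else p.swap)
        (fun q => by
          by_cases hb : ε q
          · simp [hb]; exact MeasurePreserving.id (μ.prod μ)
          · simpa [hb] using Measure.measurePreserving_swap (μ := μ) (ν := μ))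
    have hmeasJΨ : Measurable fun w => Ψ (J w) := hΨmeas.comp J.measurable
    have hswap : ∫ w, Ψ (J w) ∂π₂ = ∫ w, Ψ (J (T w)) ∂π₂ := by
      have h := integral_map (μ := π₂) mpT.measurable.aemeasurable
        hmeasJΨ.aestronglyMeasurable
      rw [mpT.map_eq] at h
      exact h
    have hpt : ∀ w, Ψ (J (T w)) ≤
        (1/2) * U ε (fun q => (w q).2) + (1/2) * U ε (fun q => (w q).1) := by
      intro w
      apply ciSup_le
      intro g
      have hkey : S g (J (T w)).2 - S g (J (T w)).1
          = (1 / Qr) * (∑ q, radSign (ε q) * g.1 ((w q).2))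
            - (1 / Qr) * (∑ q, radSign (ε q) * g.1 ((w q).1)) := by
        have h2 : (J (T w)).2 = fun q => (T w q).2 := rfl
        have h1 : (J (T w)).1 = fun q => (T w q).1 := rfl
        rw [h1, h2, hSdef]
        dsimp only
        rw [← mul_sub, ← mul_sub, ← Finset.sum_sub_distrib, ← Finset.sum_sub_distrib]
        congr 1
        apply Finset.sum_congr rfl
        intro q _
        by_cases hb : ε q
        · simp [hTdef, hb, radSign]
        · simp [hTdef, hb, radSign]; ring
      have e2 : (1 / Qr) * (∑ q, radSign (ε q) * g.1 ((w q).2))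
          ≤ (1/2) * U ε (fun q => (w q).2) := by
        have hle : |(2 / Qr) * ∑ q, radSign (ε q) * g.1 ((w q).2)|
            ≤ U ε (fun q => (w q).2) := le_ciSup (hUbddr ε _) g
        calc (1 / Qr) * (∑ q, radSign (ε q) * g.1 ((w q).2))
            ≤ |(1 / Qr) * (∑ q, radSign (ε q) * g.1 ((w q).2))| := le_abs_self _
          _ = (1/2) * |(2 / Qr) * ∑ q, radSign (ε q) * g.1 ((w q).2)| := by
              rw [abs_mul, abs_mul, abs_of_pos (by positivity : (0:ℝ) < 1/Qr),
                abs_of_pos (by positivity : (0:ℝ) < 2/Qr)]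
              ring
          _ ≤ (1/2) * U ε (fun q => (w q).2) := by linarith
      have e1 : -((1 / Qr) * (∑ q, radSign (ε q) * g.1 ((w q).1)))
          ≤ (1/2) * U ε (fun q => (w q).1) := by
        have hle : |(2 / Qr) * ∑ q, radSign (ε q) * g.1 ((w q).1)|
            ≤ U ε (fun q => (w q).1) := le_ciSup (hUbddr ε _) g
        calc -((1 / Qr) * (∑ q, radSign (ε q) * g.1 ((w q).1)))
            ≤ |(1 / Qr) * (∑ q, radSign (ε q) * g.1 ((w q).1))| := neg_le_abs _
          _ = (1/2) * |(2 / Qr) * ∑ q, radSign (ε q) * g.1 ((w q).1)| := by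
              rw [abs_mul, abs_mul, abs_of_pos (by positivity : (0:ℝ) < 1/Qr),
                abs_of_pos (by positivity : (0:ℝ) < 2/Qr)]
              ring
          _ ≤ (1/2) * U ε (fun q => (w q).1) := by linarith
      rw [hkey] at *
      linarith
    have hUm2 : Measurable fun w : Fin (n+1) → Z × Z => U ε (fun q => (w q).2) :=
      (hUmeas ε).comp (measurable_pi_lambda _ fun q => (measurable_pi_apply q).snd)
    have hUm1 : Measurable fun w : Fin (n+1) → Z × Z => U ε (fun q => (w q).1) :=
      (hUmeas ε).comp (measurable_pi_lambda _ fun q => (measurable_pi_apply q).fst)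
    have hint1 : Integrable (fun w => Ψ (J (T w))) π₂ :=
      my_integrable_of_bdd (hmeasJΨ.comp mpT.measurable) (fun w => hΨb _)
    have hi2 : Integrable (fun w : Fin (n+1) → Z × Z =>
        (1/2) * U ε (fun q => (w q).2)) π₂ :=
      (my_integrable_of_bdd hUm2 (fun w => hU2 ε _)).const_mul _
    have hi1 : Integrable (fun w : Fin (n+1) → Z × Z =>
        (1/2) * U ε (fun q => (w q).1)) π₂ :=
      (my_integrable_of_bdd hUm1 (fun w => hU2 ε _)).const_mul _
    have mpsnd : MeasurePreserving (fun (w : Fin (n+1) → Z × Z) (q : Fin (n+1)) => (w q).2)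
        π₂ ν := measurePreserving_pi _ _ (fun _ => my_mp_snd μ μ)
    have mpfst : MeasurePreserving (fun (w : Fin (n+1) → Z × Z) (q : Fin (n+1)) => (w q).1)
        π₂ ν := measurePreserving_pi _ _ (fun _ => my_mp_fst μ μ)
    have hmarg2 : ∫ w, U ε (fun q => (w q).2) ∂π₂ = ∫ z, U ε z ∂ν :=
      my_integral_marginal π₂ ν mpsnd (hUmeas ε)
    have hmarg1 : ∫ w, U ε (fun q => (w q).1) ∂π₂ = ∫ z, U ε z ∂ν :=
      my_integral_marginal π₂ ν mpfst (hUmeas ε)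
    calc ∫ w, Ψ (J w) ∂π₂ = ∫ w, Ψ (J (T w)) ∂π₂ := hswap
      _ ≤ ∫ w, ((1/2) * U ε (fun q => (w q).2) + (1/2) * U ε (fun q => (w q).1)) ∂π₂ :=
          integral_mono hint1 (hi2.add hi1) hpt
      _ = ∫ z, U ε z ∂ν := by
          rw [integral_add hi2 hi1, integral_const_mul, integral_const_mul, hmarg2, hmarg1]
          ring
  -- symmetrization conclusion
  have hEΦR : ∫ z, Φ z ∂ν ≤ R := by
    have h1 : ∀ ε : Fin (n+1) → Bool, ∫ z, Φ z ∂ν ≤ ∫ z, U ε z ∂ν :=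
      fun ε => (stepB.trans (le_of_eq stepC)).trans (stepF ε)
    have h2 : (2:ℝ) ^ (n+1) * ∫ z, Φ z ∂ν ≤ ∑ ε : Fin (n+1) → Bool, ∫ z, U ε z ∂ν := by
      calc (2:ℝ) ^ (n+1) * ∫ z, Φ z ∂ν
          = ∑ _ε : Fin (n+1) → Bool, ∫ z, Φ z ∂ν := by
            rw [Finset.sum_const, Finset.card_univ, nsmul_eq_mul]
            congr 1
            rw [Fintype.card_fun]
            push_cast
            simp
        _ ≤ _ := Finset.sum_le_sum fun ε _ => h1 ε
    rw [hRsum, le_div_iff₀ (by positivity : (0:ℝ) < 2 ^ (n+1))]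
    linarith

  -- concentration
  set EΦ : ℝ := ∫ z, Φ z ∂ν with hEΦdef
  set L : ℝ := Real.log (2 / δ) with hLdef
  have hLpos : 0 < L := Real.log_pos ((one_lt_div hδ0).2 (by linarith))
  set t : ℝ := Real.sqrt (8 * L / Qr) with htdef
  have ht0 : 0 < t := Real.sqrt_pos.2 (by positivity)
  have ht2 : t ^ 2 = 8 * L / Qr := Real.sq_sqrt (by positivity)
  set l : ℝ := Qr * t with hldef
  have hlpos : 0 < l := by positivity
  have mcd := my_mcdiarmid_mgf μ (n+1) (1/Qr) l (by positivity) Φ hΦmeas hΦb hΦdiff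
  have hQt2 : Qr * t ^ 2 = 8 * L := by rw [ht2]; field_simp
  have hC : ((n+1:ℕ):ℝ) * l ^ 2 * (1/Qr) ^ 2 / 2 = 4 * L := by
    rw [← hQr, hldef]
    have h2 : Qr * (Qr * t) ^ 2 * (1/Qr) ^ 2 / 2 = Qr * t ^ 2 / 2 := by
      field_simp
    rw [h2, hQt2]
    ring
  have hexpint : Integrable (fun z => Real.exp (l * Φ z)) ν :=
    my_integrable_of_bdd (by fun_prop) (fun z => my_exp_bound (hΦb z))
  have markov := mul_meas_ge_le_integral_of_nonneg
    (Filter.Eventually.of_forall (fun z => (Real.exp_pos (l * Φ z)).le))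
    hexpint (Real.exp (l * (t + EΦ)))
  have hsetEq : {z | Real.exp (l * (t + EΦ)) ≤ Real.exp (l * Φ z)} = {z | t + EΦ ≤ Φ z} := by
    ext z
    simp only [Set.mem_setOf_eq, Real.exp_le_exp]
    exact mul_le_mul_iff_right₀ hlpos
  rw [hsetEq] at markov
  set A : Set (Fin (n+1) → Z) := {z | t + EΦ ≤ Φ z} with hAdef
  have hAmeas : MeasurableSet A := measurableSet_le measurable_const hΦmeas
  have htoReal : (ν A).toReal ≤ Real.exp (-(4 * L)) := by
    have hlt : Real.exp (l * (t + EΦ)) * (ν A).toReal ≤ Real.exp (l * EΦ + 4 * L) := by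
      apply markov.trans
      calc ∫ z, Real.exp (l * Φ z) ∂ν
          ≤ Real.exp (l * EΦ + ((n+1:ℕ):ℝ) * l ^ 2 * (1/Qr) ^ 2 / 2) := by
            rw [hEΦdef]; exact mcd
        _ = Real.exp (l * EΦ + 4 * L) := by rw [hC]
    have h2 : (ν A).toReal ≤ Real.exp (l * EΦ + 4 * L) / Real.exp (l * (t + EΦ)) := by
      rw [le_div_iff₀ (Real.exp_pos _), mul_comm]
      exact hlt
    have hlt2 : l * t = 8 * L := by
      rw [hldef]
      calc Qr * t * t = Qr * t ^ 2 := by ring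
        _ = 8 * L := hQt2
    calc (ν A).toReal ≤ Real.exp (l * EΦ + 4 * L) / Real.exp (l * (t + EΦ)) := h2
      _ = Real.exp ((l * EΦ + 4 * L) - l * (t + EΦ)) := (Real.exp_sub _ _).symm
      _ = Real.exp (4 * L - l * t) := by ring_nf
      _ = Real.exp (-(4 * L)) := by rw [hlt2]; ring_nf
  have hδle : Real.exp (-(4 * L)) ≤ δ := by
    have hexpL : Real.exp (-L) = δ / 2 := by
      rw [hLdef, Real.exp_neg, Real.exp_log (by positivity), inv_div]
    have h4 : Real.exp (-(4 * L)) = (δ / 2) ^ 4 := by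
      rw [show -(4 * L) = ((4:ℕ):ℝ) * (-L) by push_cast; ring, Real.exp_nat_mul, hexpL]
    rw [h4]
    have h1 : δ ^ 3 ≤ 1 := pow_le_one₀ hδ0.le hδ1.le
    have h2 : δ ^ 4 ≤ δ := by
      calc δ ^ 4 = δ * δ ^ 3 := by ring
        _ ≤ δ * 1 := mul_le_mul_of_nonneg_left h1 hδ0.le
        _ = δ := mul_one δ
    calc (δ / 2) ^ 4 = δ ^ 4 / 16 := by ring
      _ ≤ δ / 16 := by linarith
      _ ≤ δ := by linarith
  have hνA : ν A ≤ ENNReal.ofReal δ := by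
    calc ν A = ENNReal.ofReal ((ν A).toReal) := (ENNReal.ofReal_toReal (measure_ne_top ν A)).symm
      _ ≤ ENNReal.ofReal (Real.exp (-(4 * L))) := ENNReal.ofReal_le_ofReal htoReal
      _ ≤ ENNReal.ofReal δ := ENNReal.ofReal_le_ofReal hδle
  have hsub : Aᶜ ⊆ {z : Fin (n+1) → Z | ∀ g ∈ G,
      ∫ ζ, g ζ ∂μ ≤ (1 / Qr) * ∑ q, g (z q) + R + t} := by
    intro z hz g hg
    have hzlt : Φ z < t + EΦ := not_le.1 hz
    have h1 : I ⟨g, hg⟩ - S ⟨g, hg⟩ z ≤ Φ z := le_ciSup (hbdd z) ⟨g, hg⟩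
    have h2 : EΦ ≤ R := hEΦR
    show ∫ ζ, g ζ ∂μ ≤ (1 / Qr) * ∑ q, g (z q) + R + t
    have h3 : I ⟨g, hg⟩ = ∫ ζ, g ζ ∂μ := rfl
    have h4 : S ⟨g, hg⟩ z = (1 / Qr) * ∑ q, g (z q) := rfl
    rw [← h3, ← h4]
    linarith
  calc ENNReal.ofReal (1 - δ) = 1 - ENNReal.ofReal δ := by
        rw [← ENNReal.ofReal_one, ← ENNReal.ofReal_sub _ hδ0.le]
    _ ≤ 1 - ν A := tsub_le_tsub_left hνA 1
    _ = ν Aᶜ := (prob_compl_eq_one_sub hAmeas).symm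
    _ ≤ _ := measure_mono hsub
end
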